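/- (Universal property of Post's cover) Let n ≥ 2 and let (G, f) be an n-ary group. Then there exist a group G* and an injective map ι : G → G* with ι(f(x₁,...,xₙ)) = ι(x₁)·ι(x₂)·…·ι(xₙ) for all x₁,...,xₙ ∈ G, such that for every group H and every map β : G → H satisfying β(f(x₁,...,xₙ)) = β(x₁)·β(x₂)·…·β(xₙ) for all x₁,...,xₙ ∈ G, there exists a unique group homomorphism h : G* → H with h ∘ ι = β. -/

import Mathlib

universe u v

/-- Associativity of an `n`-ary operation: inserting the inner `f` at position `i`
(0-indexed) of the sequence `x₀, …, x_{2n-2}` gives the same result for all positions. -/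
def PolyAssoc (n : ℕ) {G : Type*} (f : (Fin n → G) → G) : Prop :=
  ∀ i j : ℕ, i ≤ j → j < n → ∀ x : ℕ → G,
    f (fun t : Fin n =>
        if (t : ℕ) < i then x (t : ℕ)
        else if (t : ℕ) = i then f (fun s : Fin n => x (i + (s : ℕ)))
        else x ((t : ℕ) + n - 1)) =
    f (fun t : Fin n =>
        if (t : ℕ) < j then x (t : ℕ)
        else if (t : ℕ) = j then f (fun s : Fin n => x (j + (s : ℕ)))
        else x ((t : ℕ) + n - 1))

/-- Unique solvability of one-variable linear equations for an `n`-ary operation. -/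
def PolySolv (n : ℕ) {G : Type*} (f : (Fin n → G) → G) : Prop :=
  ∀ (a : Fin n → G) (c : G) (i : Fin n), ∃! x : G, f (Function.update a i x) = c

/-- `(G, f)` is an `n`-ary (polyadic) group. -/
def IsPolyadicGroup (n : ℕ) {G : Type*} (f : (Fin n → G) → G) : Prop :=
  PolyAssoc n f ∧ PolySolv n f

/-- A universal Post cover of an `n`-ary group `(G, f)`: a group `Gs` with an injective
map `ι : G → Gs` turning `f` into the iterated product, which is universal among all
such maps into groups. -/
structure UniversalPostCover (n : ℕ) (G : Type u) (f : (Fin n → G) → G) where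
  Gs : Type u
  [grp : Group Gs]
  ι : G → Gs
  inj : Function.Injective ι
  mulForm : ∀ x : Fin n → G, ι (f x) = (List.ofFn fun i : Fin n => ι (x i)).prod
  /-- universal property: every map `β : G → H` into a group satisfying
  `β(f(x₁,…,xₙ)) = β(x₁)⋯β(xₙ)` factors uniquely through `ι`. -/
  univ : ∀ (H : Type v) [Group H] (β : G → H),
    (∀ x : Fin n → G, β (f x) = (List.ofFn fun i : Fin n => β (x i)).prod) →
    ∃! h : Gs →* H, ∀ g : G, h (ι g) = β g

namespace PostCoverAux

variable {G : Type u}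

/-- Evaluate the `n`-ary operation on the first `n` entries of a sequence. -/
def fev (n : ℕ) (f : (Fin n → G) → G) (y : ℕ → G) : G := f (fun t => y (t : ℕ))

/-- Splice: `s` on `[0,m)`, then `w` shifted by `m`. -/
def spl (m : ℕ) (s w : ℕ → G) : ℕ → G := fun i => if i < m then s i else w (i - m)

/-- Prepend a letter to a word. -/
def cns (g : G) (w : ℕ → G) : ℕ → G := fun i => if i < 1 then g else w (i - 1)

theorem fev_congr {n : ℕ} (f : (Fin n → G) → G) {y z : ℕ → G} (h : ∀ i, i < n → y i = z i) :
    fev n f y = fev n f z :=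
  congrArg f (funext fun t => h t t.isLt)

theorem assoc' {n : ℕ} {f : (Fin n → G) → G} (hA : PolyAssoc n f) {i j : ℕ} (hij : i ≤ j)
    (hj : j < n) (Z : ℕ → G) :
    fev n f (fun t => if t < i then Z t else if t = i then fev n f (fun s => Z (i + s))
      else Z (t + n - 1)) =
    fev n f (fun t => if t < j then Z t else if t = j then fev n f (fun s => Z (j + s))
      else Z (t + n - 1)) :=
  hA i j hij hj Z

theorem solve {n : ℕ} {f : (Fin n → G) → G} (hS : PolySolv n f) (a : Fin n → G) (c : G)
    (i : Fin n) : ∃ x, f (Function.update a i x) = c := (hS a c i).exists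

theorem cancel {n : ℕ} {f : (Fin n → G) → G} (hS : PolySolv n f) (a a' : Fin n → G) (i : Fin n)
    (hag : ∀ j, j ≠ i → a j = a' j) (h : f a = f a') : a i = a' i := by
  obtain ⟨x, -, hu⟩ := hS a (f a') i
  have h2 : Function.update a i (a' i) = a' := by
    funext j
    rcases eq_or_ne j i with rfl | hj
    · simp
    · rw [Function.update_apply, if_neg hj, hag j hj]
  have e1 : a i = x := hu (a i) (show f (Function.update a i (a i)) = f a' by
    rw [Function.update_eq_self]; exact h)
  have e2 : a' i = x := hu (a' i) (show f (Function.update a i (a' i)) = f a' by rw [h2])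
  rw [e1, e2]

theorem update_mk {n m : ℕ} (hm : m < n) (a : Fin n → G) (x : G) (t : Fin n) :
    Function.update a ⟨m, hm⟩ x t = if (t : ℕ) = m then x else a t := by
  rw [Function.update_apply]
  by_cases h : t = (⟨m, hm⟩ : Fin n)
  · rw [if_pos h, if_pos (congrArg Fin.val h)]
  · rw [if_neg h, if_neg (fun hc => h (Fin.ext hc))]

/-- One-point agreement: two words of length `k` whose `f`-value agrees for one
completion of length `n-k` agree for all completions. -/
theorem onePoint {n : ℕ} {f : (Fin n → G) → G} (hn : 2 ≤ n) (hA : PolyAssoc n f)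
    (hS : PolySolv n f) (d : G) {k : ℕ} (hk1 : 1 ≤ k) (hk2 : k ≤ n - 1) (w w' : ℕ → G)
    (s0 : ℕ → G) (h : fev n f (spl (n - k) s0 w) = fev n f (spl (n - k) s0 w'))
    (s : ℕ → G) : fev n f (spl (n - k) s w) = fev n f (spl (n - k) s w') := by
  obtain ⟨x, hx⟩ := solve hS (fun t => if (t : ℕ) < k then d else s0 ((t : ℕ) - k))
    (s (n - k - 1)) ⟨0, by omega⟩
  have key : ∀ w0 : ℕ → G,
      fev n f (spl (n - k) s w0) =
      fev n f (fun t => if t < n - 1 then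
          (if t < n - k - 1 then s t else if t = n - k - 1 then x else d)
        else fev n f (spl (n - k) s0 w0)) := by
    intro w0
    set Z : ℕ → G := fun i => if i < n - 1 then
        (if i < n - k - 1 then s i else if i = n - k - 1 then x else d)
      else spl (n - k) s0 w0 (i - (n - 1)) with hZ
    have hinner : fev n f (fun s' => Z (n - k - 1 + s')) = s (n - k - 1) := by
      rw [← hx]
      apply congrArg f
      funext t
      rw [update_mk]
      simp only [hZ, spl]
      split_ifs <;> first | rfl | omega | (exact congrArg s0 (by omega))
    have htail : fev n f (fun s' => Z (n - 1 + s')) = fev n f (spl (n - k) s0 w0) := by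
      apply fev_congr
      intro i hi
      simp only [hZ, spl]
      split_ifs <;> first | rfl | omega | (exact congrArg w0 (by omega)) |
        (exact congrArg s0 (by omega))
    have A := assoc' hA (i := n - k - 1) (j := n - 1) (by omega) (by omega) Z
    rw [hinner, htail] at A
    have E1 : fev n f (spl (n - k) s w0) =
        fev n f (fun t => if t < n - k - 1 then Z t
          else if t = n - k - 1 then s (n - k - 1) else Z (t + n - 1)) := by
      apply fev_congr
      intro i hi
      simp only [hZ, spl]
      split_ifs <;> first | rfl | omega | (exact congrArg w0 (by omega)) |
        (exact congrArg s (by omega)) | (exact congrArg s0 (by omega))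
    have E2 : fev n f (fun t => if t < n - 1 then Z t
          else if t = n - 1 then fev n f (spl (n - k) s0 w0) else Z (t + n - 1)) =
        fev n f (fun t => if t < n - 1 then
          (if t < n - k - 1 then s t else if t = n - k - 1 then x else d)
        else fev n f (spl (n - k) s0 w0)) := by
      apply fev_congr
      intro i hi
      simp only [hZ, spl]
      split_ifs <;> first | rfl | omega | (exact congrArg s (by omega)) |
        (exact congrArg s0 (by omega))
    exact E1.trans (A.trans E2)
  rw [key w, key w', h]

/-- Length-1 words with equal fibre values under all completions are equal. -/
theorem one_val {n : ℕ} {f : (Fin n → G) → G} (hn : 2 ≤ n) (hS : PolySolv n f) (d : G)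
    (c c' : G)
    (h : ∀ s : ℕ → G, fev n f (spl (n - 1) s (fun _ => c)) =
      fev n f (spl (n - 1) s (fun _ => c'))) : c = c' := by
  have h' : f (fun t : Fin n => if (t : ℕ) < n - 1 then d else c) =
      f (fun t : Fin n => if (t : ℕ) < n - 1 then d else c') := h (fun _ => d)
  have hagree : ∀ j : Fin n, j ≠ ⟨n - 1, by omega⟩ →
      (fun t : Fin n => if (t : ℕ) < n - 1 then d else c) j =
      (fun t : Fin n => if (t : ℕ) < n - 1 then d else c') j := by
    intro j hj
    have hne : (j : ℕ) ≠ n - 1 := fun hc => hj (Fin.ext hc)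
    have hlt : (j : ℕ) < n - 1 := by have := j.isLt; omega
    show (if (j : ℕ) < n - 1 then d else c) = if (j : ℕ) < n - 1 then d else c'
    rw [if_pos hlt, if_pos hlt]
  have key := cancel hS _ _ ⟨n - 1, by omega⟩ hagree h'
  simpa using key

/-- word state space: words of length `1 ≤ k ≤ n-1`. -/
abbrev Wd (n : ℕ) (G : Type u) : Type u := {p : ℕ × (ℕ → G) // 1 ≤ p.1 ∧ p.1 ≤ n - 1}

def rel (n : ℕ) (f : (Fin n → G) → G) (u v : Wd n G) : Prop :=
  u.1.1 = v.1.1 ∧ ∀ s : ℕ → G,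
    fev n f (spl (n - u.1.1) s u.1.2) = fev n f (spl (n - v.1.1) s v.1.2)

def ws (n : ℕ) (f : (Fin n → G) → G) : Setoid (Wd n G) :=
  ⟨rel n f, ⟨fun _ => ⟨rfl, fun _ => rfl⟩,
    fun h => ⟨h.1.symm, fun s => (h.2 s).symm⟩,
    fun h h' => ⟨h.1.trans h'.1, fun s => (h.2 s).trans (h'.2 s)⟩⟩⟩

abbrev St (n : ℕ) (f : (Fin n → G) → G) : Type u := Quotient (ws n f)

def P (n : ℕ) (f : (Fin n → G) → G) (hn : 2 ≤ n) (g : G) (u : Wd n G) : Wd n G :=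
  if h : u.1.1 < n - 1 then ⟨(u.1.1 + 1, cns g u.1.2), by have := u.2.1; omega⟩
  else ⟨(1, fun _ => fev n f (cns g u.1.2)), by omega⟩

/-- prepending respects the relation. -/
theorem Pwd (n : ℕ) (f : (Fin n → G) → G) (hn : 2 ≤ n) (g : G) :
    ∀ u v : Wd n G, rel n f u v → rel n f (P n f hn g u) (P n f hn g v) := by
  rintro ⟨⟨k, w⟩, hk1, hk2⟩ ⟨⟨k', w'⟩, hk1', hk2'⟩ ⟨hlen, hval⟩
  simp only at hlen
  subst hlen
  by_cases h : k < n - 1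
  · unfold P
    rw [dif_pos (show k < n - 1 from h), dif_pos (show k < n - 1 from h)]
    refine ⟨rfl, fun s => ?_⟩
    have e : ∀ v0 : ℕ → G, (∀ i, i < n →
        spl (n - (k + 1)) s (cns g v0) i =
          spl (n - k) (fun j => if j < n - k - 1 then s j else g) v0 i) := by
      intro v0 i hi
      simp only [spl, cns]
      split_ifs <;> first | rfl | omega | (exact congrArg v0 (by omega))
    calc fev n f (spl (n - (k + 1)) s (cns g w))
        = fev n f (spl (n - k) (fun j => if j < n - k - 1 then s j else g) w) :=
          fev_congr f (e w)
      _ = fev n f (spl (n - k) (fun j => if j < n - k - 1 then s j else g) w') :=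
          hval _
      _ = fev n f (spl (n - (k + 1)) s (cns g w')) := (fev_congr f (e w')).symm
  · unfold P
    rw [dif_neg (show ¬ k < n - 1 from h), dif_neg (show ¬ k < n - 1 from h)]
    have hk : k = n - 1 := by omega
    have hcc : fev n f (cns g w) = fev n f (cns g w') := by
      have h1 : n - k = 1 := by omega
      have hv := hval (fun _ => g)
      rw [h1] at hv
      have e : ∀ v0 : ℕ → G, ∀ i, i < n → spl 1 (fun _ => g) v0 i = cns g v0 i := by
        intro v0 i hi
        simp only [spl, cns]
      exact ((fev_congr f (e w)).symm.trans hv).trans (fev_congr f (e w'))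
    refine ⟨rfl, fun s => ?_⟩
    rw [hcc]

/-- prepending is injective up to the relation. -/
theorem Pinj (n : ℕ) (f : (Fin n → G) → G) (hn : 2 ≤ n) (hA : PolyAssoc n f)
    (hS : PolySolv n f) (g : G) :
    ∀ u v : Wd n G, rel n f (P n f hn g u) (P n f hn g v) → rel n f u v := by
  have d : G := g
  rintro ⟨⟨k, w⟩, hk1, hk2⟩ ⟨⟨k', w'⟩, hk1', hk2'⟩ h
  by_cases h1 : k < n - 1 <;> by_cases h2 : k' < n - 1 <;>
    unfold P at h <;>
    [rw [dif_pos (show k < n - 1 from h1), dif_pos (show k' < n - 1 from h2)] at h;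
     rw [dif_pos (show k < n - 1 from h1), dif_neg (show ¬ k' < n - 1 from h2)] at h;
     rw [dif_neg (show ¬ k < n - 1 from h1), dif_pos (show k' < n - 1 from h2)] at h;
     rw [dif_neg (show ¬ k < n - 1 from h1), dif_neg (show ¬ k' < n - 1 from h2)] at h]
  · obtain ⟨hlen, hval⟩ := h
    have hkk : k = k' := by
      have : k + 1 = k' + 1 := hlen
      omega
    subst hkk
    refine ⟨rfl, fun s => ?_⟩
    have e : ∀ v0 : ℕ → G, (∀ i, i < n →
        spl (n - (k + 1)) (fun _ => d) (cns g v0) i =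
          spl (n - k) (fun j => if j < n - k - 1 then d else g) v0 i) := by
      intro v0 i hi
      simp only [spl, cns]
      split_ifs <;> first | rfl | omega | (exact congrArg v0 (by omega))
    have h0 : fev n f (spl (n - k) (fun j => if j < n - k - 1 then d else g) w) =
        fev n f (spl (n - k) (fun j => if j < n - k - 1 then d else g) w') :=
      (fev_congr f (e w)).symm.trans ((hval (fun _ => d)).trans (fev_congr f (e w')))
    exact onePoint hn hA hS d hk1 hk2 w w' _ h0 s
  · exact absurd (show k + 1 = 1 from h.1) (by omega)
  · exact absurd (show (1 : ℕ) = k' + 1 from h.1) (by omega)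
  · obtain ⟨-, hval⟩ := h
    have hk : k = n - 1 := by omega
    have hk' : k' = n - 1 := by omega
    have hcc : fev n f (cns g w) = fev n f (cns g w') := by
      apply one_val hn hS d
      intro s
      exact hval s
    have h0 : fev n f (spl (n - k) (fun _ => g) w) =
        fev n f (spl (n - k') (fun _ => g) w') := by
      have e : ∀ v0 : ℕ → G, ∀ i, i < n →
          spl (n - (n-1)) (fun _ => g) v0 i = cns g v0 i := by
        intro v0 i hi
        simp only [spl, cns]
        split_ifs <;> first | rfl | omega | (exact congrArg v0 (by omega))
      rw [hk, hk']
      exact (fev_congr f (e w)).trans (hcc.trans (fev_congr f (e w')).symm)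
    have hkk : k' = k := by omega
    subst hkk
    refine ⟨rfl, fun s => ?_⟩
    exact onePoint hn hA hS d hk1 hk2 w w' (fun _ => g) h0 s

theorem Psurj (n : ℕ) (f : (Fin n → G) → G) (hn : 2 ≤ n) (hA : PolyAssoc n f)
    (hS : PolySolv n f) (g : G) (v : Wd n G) :
    ∃ u : Wd n G, rel n f (P n f hn g u) v := by
  have d : G := g
  obtain ⟨⟨k, w⟩, hk1, hk2⟩ := v
  by_cases hk : 2 ≤ k
  · -- length ≥ 2: remove first letter
    obtain ⟨x, hx⟩ := solve hS (fun t => if (t : ℕ) = n - k then g else d)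
      (fev n f (spl (n - k) (fun _ => d) w)) ⟨n - 1, by omega⟩
    refine ⟨⟨(k - 1, fun i => if i = k - 2 then x else d), by omega, by omega⟩, ?_⟩
    unfold P
    rw [dif_pos (show k - 1 < n - 1 by omega)]
    have h0 : fev n f (spl (n - k) (fun _ => d)
        (cns g (fun i => if i = k - 2 then x else d))) =
        fev n f (spl (n - k) (fun _ => d) w) := by
      rw [← hx]
      apply congrArg f
      funext t
      rw [update_mk]
      simp only [spl, cns]
      split_ifs <;> first | rfl | omega
    refine ⟨show k - 1 + 1 = k by omega, fun s => ?_⟩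
    show fev n f (spl (n - (k - 1 + 1)) s (cns g (fun i => if i = k - 2 then x else d))) =
      fev n f (spl (n - k) s w)
    rw [show n - (k - 1 + 1) = n - k from by omega]
    exact onePoint hn hA hS d hk1 hk2 _ w (fun _ => d) h0 s
  · -- length 1: add n-1 letters
    have hk1' : k = 1 := by omega
    obtain ⟨x, hx⟩ := solve hS (fun t => if (t : ℕ) = 0 then g else d) (w 0) ⟨n - 1, by omega⟩
    refine ⟨⟨(n - 1, fun i => if i = n - 2 then x else d), by omega, le_refl _⟩, ?_⟩
    unfold P
    rw [dif_neg (show ¬ n - 1 < n - 1 by omega)]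
    have hval : fev n f (cns g (fun i => if i = n - 2 then x else d)) = w 0 := by
      rw [← hx]
      apply congrArg f
      funext t
      rw [update_mk]
      simp only [cns]
      split_ifs <;> first | rfl | omega
    refine ⟨show (1 : ℕ) = k by omega, fun s => ?_⟩
    show fev n f (spl (n - 1) s
        (fun _ => fev n f (cns g (fun i => if i = n - 2 then x else d)))) =
      fev n f (spl (n - k) s w)
    apply fev_congr
    intro i hi
    simp only [spl]
    split_ifs <;> first | rfl | omega | (exact congrArg s (by omega)) |
      (exact hval.trans (congrArg w (by omega)))

def Pbar (n : ℕ) (f : (Fin n → G) → G) (hn : 2 ≤ n) (g : G) : St n f → St n f :=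
  Quotient.lift (fun u => Quotient.mk (ws n f) (P n f hn g u))
    (fun u v h => Quotient.sound (Pwd n f hn g u v h))

noncomputable def βperm (n : ℕ) (f : (Fin n → G) → G) (hn : 2 ≤ n) (hA : PolyAssoc n f)
    (hS : PolySolv n f) (g : G) : Equiv.Perm (St n f) :=
  Equiv.ofBijective (Pbar n f hn g)
    ⟨fun q q' => Quotient.inductionOn₂ q q' (fun u v h =>
        Quotient.sound (Pinj n f hn hA hS g u v (Quotient.exact h))),
     fun q => Quotient.inductionOn q (fun v => by
        obtain ⟨u, hu⟩ := Psurj n f hn hA hS g v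
        exact ⟨Quotient.mk (ws n f) u, Quotient.sound hu⟩)⟩

theorem Papp_lt (n : ℕ) (f : (Fin n → G) → G) (hn : 2 ≤ n) (hA : PolyAssoc n f)
    (hS : PolySolv n f) (g : G) (k : ℕ) (w : ℕ → G) (hk : 1 ≤ k ∧ k ≤ n - 1)
    (h : k < n - 1) :
    βperm n f hn hA hS g (Quotient.mk (ws n f) ⟨(k, w), hk⟩) =
    Quotient.mk (ws n f) ⟨(k + 1, cns g w), by omega⟩ := by
  have hP : P n f hn g ⟨(k, w), hk⟩ = (⟨(k + 1, cns g w), by omega⟩ : Wd n G) :=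
    dif_pos (show k < n - 1 from h)
  show Quotient.mk (ws n f) (P n f hn g ⟨(k, w), hk⟩) = _
  rw [hP]

theorem Papp_ge (n : ℕ) (f : (Fin n → G) → G) (hn : 2 ≤ n) (hA : PolyAssoc n f)
    (hS : PolySolv n f) (g : G) (k : ℕ) (w : ℕ → G) (hk : 1 ≤ k ∧ k ≤ n - 1)
    (h : ¬ k < n - 1) :
    βperm n f hn hA hS g (Quotient.mk (ws n f) ⟨(k, w), hk⟩) =
    Quotient.mk (ws n f) ⟨(1, fun _ => fev n f (cns g w)), by omega⟩ := by
  have hP : P n f hn g ⟨(k, w), hk⟩ =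
      (⟨(1, fun _ => fev n f (cns g w)), by omega⟩ : Wd n G) :=
    dif_neg (show ¬ k < n - 1 from h)
  show Quotient.mk (ws n f) (P n f hn g ⟨(k, w), hk⟩) = _
  rw [hP]

def shf (m : ℕ) (y : ℕ → G) : ℕ → G := fun i => y (m + i)

noncomputable def Lp (n : ℕ) (f : (Fin n → G) → G) (hn : 2 ≤ n) (hA : PolyAssoc n f)
    (hS : PolySolv n f) : ℕ → (ℕ → G) → Equiv.Perm (St n f)
  | 0, _ => 1
  | (m + 1), y => βperm n f hn hA hS (y 0) * Lp n f hn hA hS m (shf 1 y)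

theorem Lp_zero (n : ℕ) (f : (Fin n → G) → G) (hn : 2 ≤ n) (hA : PolyAssoc n f)
    (hS : PolySolv n f) (y : ℕ → G) : Lp n f hn hA hS 0 y = 1 := rfl

theorem Lp_succ (n : ℕ) (f : (Fin n → G) → G) (hn : 2 ≤ n) (hA : PolyAssoc n f)
    (hS : PolySolv n f) (m : ℕ) (y : ℕ → G) :
    Lp n f hn hA hS (m + 1) y = βperm n f hn hA hS (y 0) * Lp n f hn hA hS m (shf 1 y) := rfl

theorem Lp_ofFn (n : ℕ) (f : (Fin n → G) → G) (hn : 2 ≤ n) (hA : PolyAssoc n f)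
    (hS : PolySolv n f) (m : ℕ) : ∀ y : ℕ → G,
    Lp n f hn hA hS m y = (List.ofFn fun i : Fin m => βperm n f hn hA hS (y (i : ℕ))).prod := by
  induction m with
  | zero => intro y; simp [Lp_zero]
  | succ m ih =>
    intro y
    rw [List.ofFn_succ, List.prod_cons, Lp_succ, ih (shf 1 y)]
    congr 1
    refine congrArg List.prod (congrArg List.ofFn (funext fun i => ?_))
    refine congrArg _ ?_
    show y (1 + (i : ℕ)) = y ((i.succ : Fin (_ + 1)) : ℕ)
    rw [Fin.val_succ]
    exact congrArg y (by omega)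

theorem Lp_add (n : ℕ) (f : (Fin n → G) → G) (hn : 2 ≤ n) (hA : PolyAssoc n f)
    (hS : PolySolv n f) (m1 m2 : ℕ) : ∀ y : ℕ → G,
    Lp n f hn hA hS (m1 + m2) y = Lp n f hn hA hS m1 y * Lp n f hn hA hS m2 (shf m1 y) := by
  induction m1 with
  | zero =>
    intro y
    have hs : shf 0 y = y := funext fun i => congrArg y (by omega)
    rw [Nat.zero_add, Lp_zero, hs, one_mul]
  | succ m ih =>
    intro y
    have h1 : m + 1 + m2 = (m + m2) + 1 := by omega
    rw [h1, Lp_succ, Lp_succ, ih (shf 1 y), mul_assoc]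
    have hsh : shf m (shf 1 y) = shf (m + 1) y := funext fun i => congrArg y (by
      show 1 + (m + i) = m + 1 + i
      omega)
    rw [hsh]

/-- Phase A: prepending `m` letters without reduction. -/
theorem phaseA (n : ℕ) (f : (Fin n → G) → G) (hn : 2 ≤ n) (hA : PolyAssoc n f)
    (hS : PolySolv n f) (m : ℕ) : ∀ (y : ℕ → G) (k : ℕ) (w : ℕ → G)
    (hk : 1 ≤ k ∧ k ≤ n - 1) (hkm : k + m ≤ n - 1),
    Lp n f hn hA hS m y (Quotient.mk (ws n f) ⟨(k, w), hk⟩) =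
    Quotient.mk (ws n f) ⟨(k + m, spl m y w), by omega⟩ := by
  induction m with
  | zero =>
    intro y k w hk hkm
    rw [Lp_zero]
    have : (⟨(k + 0, spl 0 y w), by omega⟩ : Wd n G) = ⟨(k, w), hk⟩ := by
      apply Subtype.ext
      apply Prod.ext
      · rfl
      · funext i; simp [spl]
    rw [this]
    rfl
  | succ m ih =>
    intro y k w hk hkm
    rw [Lp_succ, Equiv.Perm.mul_apply, ih (shf 1 y) k w hk (by omega),
      Papp_lt n f hn hA hS (y 0) (k + m) _ _ (by omega)]
    have : cns (y 0) (spl m (shf 1 y) w) = spl (m + 1) y w := by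
      funext i
      simp only [cns, spl, shf]
      split_ifs <;> first | rfl | omega | (exact congrArg y (by omega)) |
        (exact congrArg w (by omega))
    apply congrArg
    apply Subtype.ext
    apply Prod.ext
    · show k + m + 1 = k + (m + 1); omega
    · exact this

/-- Phase B: prepending exactly `n - k` letters, with one reduction. -/
theorem phaseB (n : ℕ) (f : (Fin n → G) → G) (hn : 2 ≤ n) (hA : PolyAssoc n f)
    (hS : PolySolv n f) (y : ℕ → G) (k : ℕ) (w : ℕ → G) (hk : 1 ≤ k ∧ k ≤ n - 1) :
    Lp n f hn hA hS (n - k) y (Quotient.mk (ws n f) ⟨(k, w), hk⟩) =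
    Quotient.mk (ws n f) ⟨(1, fun _ => fev n f (spl (n - k) y w)), by omega⟩ := by
  have h1 : n - k = (n - k - 1) + 1 := by omega
  rw [h1, Lp_succ, Equiv.Perm.mul_apply, phaseA n f hn hA hS (n - k - 1) (shf 1 y) k w hk
    (by omega), Papp_ge n f hn hA hS (y 0) (k + (n - k - 1)) _ _ (by omega)]
  apply congrArg
  apply Subtype.ext
  apply Prod.ext
  · rfl
  · funext i
    show fev n f (cns (y 0) (spl (n - k - 1) (shf 1 y) w)) =
      fev n f (spl (n - k - 1 + 1) y w)
    apply fev_congr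
    intro j hj
    simp only [cns, spl, shf]
    split_ifs <;> first | rfl | omega | (exact congrArg y (by omega)) |
      (exact congrArg w (by omega))

/-- extension of a Fin-tuple to ℕ. -/
def xext (n : ℕ) (hn : 2 ≤ n) (x : Fin n → G) : ℕ → G :=
  fun i => if h : i < n then x ⟨i, h⟩ else x ⟨0, by omega⟩

theorem xext_lt (n : ℕ) (hn : 2 ≤ n) (x : Fin n → G) (i : ℕ) (h : i < n) :
    xext n hn x i = x ⟨i, h⟩ := dif_pos h

theorem fev_xext (n : ℕ) (hn : 2 ≤ n) (f : (Fin n → G) → G) (x : Fin n → G) :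
    fev n f (xext n hn x) = f x := by
  apply congrArg f
  funext t
  rw [xext_lt n hn x _ t.isLt]

/-- Main computation: the product of the `β (x i)` acts like `β (f x)`. -/
theorem mainLp (n : ℕ) (f : (Fin n → G) → G) (hn : 2 ≤ n) (hA : PolyAssoc n f)
    (hS : PolySolv n f) (x : Fin n → G) (u : Wd n G) :
    Lp n f hn hA hS n (xext n hn x) (Quotient.mk (ws n f) u) =
    βperm n f hn hA hS (f x) (Quotient.mk (ws n f) u) := by
  obtain ⟨⟨k, w⟩, hk1, hk2⟩ := u
  have hsplit : Lp n f hn hA hS n (xext n hn x) =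
      Lp n f hn hA hS k (xext n hn x) *
        Lp n f hn hA hS (n - k) (shf k (xext n hn x)) := by
    have h2 := Lp_add n f hn hA hS k (n - k) (xext n hn x)
    rw [show k + (n - k) = n from by omega] at h2
    exact h2
  rw [hsplit, Equiv.Perm.mul_apply, phaseB n f hn hA hS (shf k (xext n hn x)) k w ⟨hk1, hk2⟩]
  by_cases hkc : k < n - 1
  · rw [phaseA n f hn hA hS k (xext n hn x) 1 _ ⟨le_refl 1, by omega⟩ (by omega),
      Papp_lt n f hn hA hS (f x) k w ⟨hk1, hk2⟩ hkc]
    apply Quotient.sound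
    refine ⟨by show 1 + k = k + 1; omega, fun s => ?_⟩
    -- the states: LHS (1+k, spl k x' (const y₁)), RHS (k+1, cns (f x) w)
    set Z : ℕ → G := fun i => if i < n - k - 1 then s i
      else if i < n - k - 1 + n then xext n hn x (i - (n - k - 1))
      else w (i - (n - k - 1) - n) with hZ
    have hfx : fev n f (fun s' => Z (n - k - 1 + s')) = f x := by
      apply congrArg f
      funext t
      simp only [hZ]
      rw [if_neg (by omega), if_pos (by omega)]
      rw [show n - k - 1 + (t : ℕ) - (n - k - 1) = (t : ℕ) from by omega]
      exact (xext_lt n hn x _ t.isLt).trans (congrArg x (Fin.eta t t.isLt))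
    have hy1 : fev n f (fun s' => Z (n - 1 + s')) =
        fev n f (spl (n - k) (shf k (xext n hn x)) w) := by
      apply fev_congr
      intro i hi
      simp only [hZ, spl, shf]
      split_ifs <;> first | rfl | omega | (exact congrArg (xext n hn x) (by omega)) |
        (exact congrArg w (by omega))
    have A := assoc' hA (i := n - k - 1) (j := n - 1) (by omega) (by omega) Z
    rw [hfx, hy1] at A
    calc fev n f (spl (n - (1 + k)) s
          (spl k (xext n hn x) (fun _ => fev n f (spl (n - k) (shf k (xext n hn x)) w))))
        = fev n f (fun t => if t < n - 1 then Z t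
            else if t = n - 1 then fev n f (spl (n - k) (shf k (xext n hn x)) w)
            else Z (t + n - 1)) := by
          apply fev_congr
          intro i hi
          simp only [hZ, spl]
          split_ifs <;> first | rfl | omega | (exact congrArg s (by omega)) |
            (exact congrArg (xext n hn x) (by omega))
      _ = fev n f (fun t => if t < n - k - 1 then Z t
            else if t = n - k - 1 then f x else Z (t + n - 1)) := A.symm
      _ = fev n f (spl (n - (k + 1)) s (cns (f x) w)) := by
          apply fev_congr
          intro i hi
          simp only [hZ, spl, cns]
          split_ifs <;> first | rfl | omega | (exact congrArg s (by omega)) |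
            (exact congrArg w (by omega))
  · -- k = n - 1
    have hkeq : k = n - 1 := by omega
    subst hkeq
    rw [show n - (n - 1) = 1 from by omega] at *
    rw [phaseB n f hn hA hS (xext n hn x) 1 _ ⟨le_refl 1, by omega⟩]
    rw [Papp_ge n f hn hA hS (f x) (n - 1) w ⟨hk1, hk2⟩ (by omega)]
    apply Quotient.sound
    refine ⟨rfl, fun s => ?_⟩
    -- both are length-1 const states; suffices values equal
    have hval : fev n f (spl (n - 1) (xext n hn x)
          (fun _ => fev n f (spl 1 (shf (n - 1) (xext n hn x)) w))) =
        fev n f (cns (f x) w) := by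
      set Z : ℕ → G := fun i => if i < n then xext n hn x i else w (i - n) with hZ
      have hfx : fev n f (fun s' => Z (0 + s')) = f x := by
        apply congrArg f
        funext t
        simp only [hZ]
        rw [show 0 + (t : ℕ) = (t : ℕ) from by omega, if_pos t.isLt]
        exact (xext_lt n hn x _ t.isLt).trans (congrArg x (Fin.eta t t.isLt))
      have hy1 : fev n f (fun s' => Z (n - 1 + s')) =
          fev n f (spl 1 (shf (n - 1) (xext n hn x)) w) := by
        apply fev_congr
        intro i hi
        simp only [hZ, spl, shf]
        split_ifs <;> first | rfl | omega | (exact congrArg (xext n hn x) (by omega)) |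
          (exact congrArg w (by omega))
      have A := assoc' hA (i := 0) (j := n - 1) (by omega) (by omega) Z
      rw [hfx, hy1] at A
      calc fev n f (spl (n - 1) (xext n hn x)
            (fun _ => fev n f (spl 1 (shf (n - 1) (xext n hn x)) w)))
          = fev n f (fun t => if t < n - 1 then Z t
              else if t = n - 1 then fev n f (spl 1 (shf (n - 1) (xext n hn x)) w)
              else Z (t + n - 1)) := by
            apply fev_congr
            intro i hi
            simp only [hZ, spl]
            split_ifs <;> first | rfl | omega |
              (exact congrArg (xext n hn x) (by omega))
        _ = fev n f (fun t => if t < 0 then Z t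
              else if t = 0 then f x else Z (t + n - 1)) := A.symm
        _ = fev n f (cns (f x) w) := by
            apply fev_congr
            intro i hi
            simp only [hZ, cns]
            split_ifs <;> first | rfl | omega | (exact congrArg w (by omega))
    rw [hval]

theorem βperm_mul (n : ℕ) (f : (Fin n → G) → G) (hn : 2 ≤ n) (hA : PolyAssoc n f)
    (hS : PolySolv n f) (x : Fin n → G) :
    βperm n f hn hA hS (f x) =
    (List.ofFn fun i : Fin n => βperm n f hn hA hS (x i)).prod := by
  have h1 : (List.ofFn fun i : Fin n => βperm n f hn hA hS (x i)) =
      (List.ofFn fun i : Fin n => βperm n f hn hA hS (xext n hn x (i : ℕ))) := by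
    congr 1
    funext i
    rw [xext_lt n hn x _ i.isLt]
  rw [h1, ← Lp_ofFn]
  apply Equiv.ext
  intro q
  refine Quotient.inductionOn q (fun u => ?_)
  exact (mainLp n f hn hA hS x u).symm

theorem βperm_inj (n : ℕ) (f : (Fin n → G) → G) [Nonempty G] (hn : 2 ≤ n)
    (hA : PolyAssoc n f) (hS : PolySolv n f) :
    Function.Injective (βperm n f hn hA hS) := by
  intro g g' h
  have d : G := Classical.arbitrary G
  have happ := congrArg (fun e : Equiv.Perm (St n f) =>
    e (Quotient.mk (ws n f) ⟨(n - 1, fun _ => d), by omega, le_refl _⟩)) h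
  rw [Papp_ge n f hn hA hS g (n - 1) _ _ (by omega),
    Papp_ge n f hn hA hS g' (n - 1) _ _ (by omega)] at happ
  have hr := Quotient.exact happ
  have hval : fev n f (cns g (fun _ => d)) = fev n f (cns g' (fun _ => d)) := by
    apply one_val hn hS d
    intro s
    exact hr.2 s
  have h' : f (fun t : Fin n => if (t : ℕ) < 1 then g else d) =
      f (fun t : Fin n => if (t : ℕ) < 1 then g' else d) := hval
  have hagree : ∀ j : Fin n, j ≠ ⟨0, by omega⟩ →
      (fun t : Fin n => if (t : ℕ) < 1 then g else d) j =
      (fun t : Fin n => if (t : ℕ) < 1 then g' else d) j := by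
    intro j hj
    have hne : (j : ℕ) ≠ 0 := fun hc => hj (Fin.ext hc)
    show (if (j : ℕ) < 1 then g else d) = if (j : ℕ) < 1 then g' else d
    rw [if_neg (by omega), if_neg (by omega)]
  have key := cancel hS _ _ ⟨0, by omega⟩ hagree h'
  simpa using key

theorem kill_rels {G : Type u} {H : Type v} [Group H] (n : ℕ) (f : (Fin n → G) → G)
    (β : G → H)
    (hβ : ∀ x : Fin n → G, β (f x) = (List.ofFn fun i : Fin n => β (x i)).prod) :
    ∀ r ∈ {r : FreeGroup G | ∃ x : Fin n → G,
      r = (FreeGroup.of (f x))⁻¹ * (List.ofFn fun i : Fin n => FreeGroup.of (x i)).prod},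
      FreeGroup.lift β r = 1 := by
  intro r hr
  obtain ⟨x, rfl⟩ := hr
  rw [map_mul, map_inv, FreeGroup.lift_apply_of, inv_mul_eq_one, hβ x, map_list_prod,
    List.map_ofFn]
  refine congrArg List.prod (congrArg List.ofFn (funext fun i => ?_))
  exact (FreeGroup.lift_apply_of).symm

end PostCoverAux

open PostCoverAux in
/-- universal property of Post's cover: every `n`-ary group admits a
universal Post cover. -/
theorem post_cover_universal_property {G : Type u} [Nonempty G] (n : ℕ) (hn : 2 ≤ n)
    (f : (Fin n → G) → G) (hf : IsPolyadicGroup n f) :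
    Nonempty (UniversalPostCover.{u, v} n G f) := by
  classical
  obtain ⟨hA, hS⟩ := hf
  set rels : Set (FreeGroup G) :=
    {r | ∃ x : Fin n → G,
      r = (FreeGroup.of (f x))⁻¹ * (List.ofFn fun i : Fin n => FreeGroup.of (x i)).prod}
    with hrels
  have hmulForm : ∀ x : Fin n → G,
      (PresentedGroup.of (rels := rels) (f x)) =
      (List.ofFn fun i : Fin n => PresentedGroup.of (rels := rels) (x i)).prod := by
    intro x
    have hmem : (FreeGroup.of (f x))⁻¹ *
        (List.ofFn fun i : Fin n => FreeGroup.of (x i)).prod ∈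
        Subgroup.normalClosure rels :=
      Subgroup.subset_normalClosure ⟨x, rfl⟩
    have h1 : (PresentedGroup.mk rels) ((FreeGroup.of (f x))⁻¹ *
        (List.ofFn fun i : Fin n => FreeGroup.of (x i)).prod) = 1 :=
      (QuotientGroup.eq_one_iff _).mpr hmem
    rw [map_mul, map_inv] at h1
    have h2 : (PresentedGroup.mk rels) ((List.ofFn fun i : Fin n => FreeGroup.of (x i)).prod) =
        (PresentedGroup.mk rels) (FreeGroup.of (f x)) := by
      have := mul_eq_one_iff_inv_eq.mp h1
      rw [inv_inv] at this
      exact this.symm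
    calc PresentedGroup.of (rels := rels) (f x)
        = (PresentedGroup.mk rels) (FreeGroup.of (f x)) := rfl
      _ = (PresentedGroup.mk rels) ((List.ofFn fun i : Fin n => FreeGroup.of (x i)).prod) :=
          h2.symm
      _ = (List.ofFn fun i : Fin n => PresentedGroup.of (rels := rels) (x i)).prod := by
          rw [map_list_prod, List.map_ofFn]
          rfl
  -- injectivity via the concrete permutation model
  have hβperm := βperm_mul n f hn hA hS
  have hβinj := βperm_inj n f hn hA hS
  have hinj : Function.Injective (PresentedGroup.of (rels := rels) : G → PresentedGroup rels) := by
    intro g g' h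
    have hk : ∀ r ∈ rels, FreeGroup.lift (βperm n f hn hA hS) r = 1 :=
      kill_rels n f (βperm n f hn hA hS) hβperm
    have := congrArg (PresentedGroup.toGroup hk) h
    rw [PresentedGroup.toGroup.of, PresentedGroup.toGroup.of] at this
    exact hβinj this
  refine ⟨⟨PresentedGroup rels, PresentedGroup.of, hinj, hmulForm, ?_⟩⟩
  intro H _ β hβ
  have hk : ∀ r ∈ rels, FreeGroup.lift β r = 1 := kill_rels n f β hβ
  refine ⟨PresentedGroup.toGroup hk, fun g => PresentedGroup.toGroup.of hk, ?_⟩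
  intro h hh
  apply PresentedGroup.ext
  intro g
  rw [hh g, PresentedGroup.toGroup.of]
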